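/- Let X be a metric space, x₁, x₂ ∈ X with d(x₁,x₂) ≥ 2, and γ : [a,b] → X a Lipschitz curve from x₁ to x₂ of length ℓ(γ) ≤ 2. Then d(x₁,x₂) = 2, ℓ(γ) = 2, and the image γ([a,b]), equipped with the subspace metric, is isometric to the interval [−1,1] ⊆ ℝ. -/
import Mathlib


/-- If `γ : [a,b] → X` is a Lipschitz curve from `x₁` to `x₂` with `d(x₁,x₂) ≥ 2` and
length (total variation) at most `2`, then `d(x₁,x₂) = 2`, the length is exactly `2`,
and the image of `γ` with the subspace metric is isometric to `[-1,1] ⊆ ℝ`. -/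
theorem stmt_5 {X : Type*} [MetricSpace X] (a b : ℝ) (hab : a ≤ b)
    (γ : ℝ → X) (K : NNReal) (hγ : LipschitzOnWith K γ (Set.Icc a b))
    (x₁ x₂ : X) (ha : γ a = x₁) (hb : γ b = x₂)
    (hd : 2 ≤ dist x₁ x₂) (hlen : eVariationOn γ (Set.Icc a b) ≤ 2) :
    dist x₁ x₂ = 2 ∧ eVariationOn γ (Set.Icc a b) = 2 ∧
      Nonempty ((γ '' Set.Icc a b) ≃ᵢ (Set.Icc (-1 : ℝ) 1)) := by
  have hmema : a ∈ Set.Icc a b := ⟨le_rfl, hab⟩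
  have hmemb : b ∈ Set.Icc a b := ⟨hab, le_rfl⟩
  -- the total variation is exactly 2
  have hE2 : eVariationOn γ (Set.Icc a b) = 2 := by
    refine le_antisymm hlen ?_
    have h1 : edist (γ a) (γ b) ≤ eVariationOn γ (Set.Icc a b) :=
      eVariationOn.edist_le γ hmema hmemb
    have h2 : (2 : ENNReal) ≤ edist x₁ x₂ := by
      rw [edist_dist]
      calc (2 : ENNReal) = ENNReal.ofReal 2 := by norm_num
        _ ≤ ENNReal.ofReal (dist x₁ x₂) := ENNReal.ofReal_le_ofReal hd
    rw [ha, hb] at h1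
    exact h2.trans h1
  -- finiteness of variation on subintervals
  have hfin : ∀ s t : ℝ, a ≤ s → t ≤ b → eVariationOn γ (Set.Icc s t) ≠ ⊤ := by
    intro s t hs ht
    have : eVariationOn γ (Set.Icc s t) ≤ eVariationOn γ (Set.Icc a b) :=
      eVariationOn.mono γ (Set.Icc_subset_Icc hs ht)
    rw [hE2] at this
    exact (this.trans_lt (by norm_num)).ne
  -- additivity of variation
  have hadd : ∀ p q r : ℝ, a ≤ p → p ≤ q → q ≤ r → r ≤ b →
      eVariationOn γ (Set.Icc p q) + eVariationOn γ (Set.Icc q r)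
        = eVariationOn γ (Set.Icc p r) := by
    intro p q r hap hpq hqr hrb
    have := eVariationOn.Icc_add_Icc γ (s := Set.Icc a b) hpq hqr ⟨hap.trans hpq, hqr.trans hrb⟩
    rwa [Set.inter_eq_self_of_subset_right (Set.Icc_subset_Icc hap (hqr.trans hrb)),
      Set.inter_eq_self_of_subset_right (Set.Icc_subset_Icc (hap.trans hpq) hrb),
      Set.inter_eq_self_of_subset_right (Set.Icc_subset_Icc hap hrb)] at this
  -- the real-valued arclength function
  set v : ℝ → ℝ := fun t => (eVariationOn γ (Set.Icc a t)).toReal with hv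
  have hva : v a = 0 := by
    simp only [hv, Set.Icc_self]
    rw [eVariationOn.subsingleton γ Set.subsingleton_singleton]
    simp
  have hvb : v b = 2 := by simp [hv, hE2]
  have hvdiff : ∀ s t : ℝ, s ∈ Set.Icc a b → t ∈ Set.Icc a b → s ≤ t →
      v t - v s = (eVariationOn γ (Set.Icc s t)).toReal := by
    intro s t hs ht hst
    have h := hadd a s t le_rfl hs.1 hst ht.2
    have := congrArg ENNReal.toReal h
    rw [ENNReal.toReal_add (hfin a s le_rfl hs.2) (hfin s t hs.1 ht.2)] at this
    simp only [hv]
    linarith [this]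
  have hdist_le : ∀ s t : ℝ, s ∈ Set.Icc a b → t ∈ Set.Icc a b → s ≤ t →
      dist (γ s) (γ t) ≤ v t - v s := by
    intro s t hs ht hst
    rw [hvdiff s t hs ht hst]
    have h := eVariationOn.edist_le γ (Set.left_mem_Icc.mpr hst) (Set.right_mem_Icc.mpr hst)
    rw [edist_dist] at h
    have := ENNReal.toReal_mono (hfin s t hs.1 ht.2) h
    rwa [ENNReal.toReal_ofReal dist_nonneg] at this
  have hd2 : dist x₁ x₂ = 2 := by
    refine le_antisymm ?_ hd
    have := hdist_le a b hmema hmemb hab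
    rw [ha, hb, hva, hvb] at this
    linarith
  -- the key geodesic identity
  have hkey : ∀ s t : ℝ, s ∈ Set.Icc a b → t ∈ Set.Icc a b → s ≤ t →
      dist (γ s) (γ t) = v t - v s := by
    intro s t hs ht hst
    have h1 := hdist_le a s hmema hs hs.1
    have h2 := hdist_le s t hs ht hst
    have h3 := hdist_le t b ht hmemb ht.2
    have htri : dist x₁ x₂ ≤ dist x₁ (γ s) + dist (γ s) (γ t) + dist (γ t) x₂ := by
      rw [← ha, ← hb]
      exact dist_triangle4 (γ a) (γ s) (γ t) (γ b)
    rw [ha] at h1; rw [hb] at h3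
    have := hd2
    linarith
  have hkey' : ∀ s t : ℝ, s ∈ Set.Icc a b → t ∈ Set.Icc a b →
      dist (γ s) (γ t) = |v s - v t| := by
    intro s t hs ht
    rcases le_total s t with h | h
    · rw [hkey s t hs ht h, abs_of_nonpos (by linarith [hkey s t hs ht h, (dist_nonneg : (0:ℝ) ≤ dist (γ s) (γ t))])]
      ring
    · rw [dist_comm, hkey t s ht hs h, abs_of_nonneg (by linarith [hkey t s ht hs h, (dist_nonneg : (0:ℝ) ≤ dist (γ t) (γ s))])]
  have hvmono : ∀ t ∈ Set.Icc a b, v t ∈ Set.Icc (0:ℝ) 2 := by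
    intro t ht
    constructor
    · have := hkey a t hmema ht ht.1
      rw [hva] at this
      linarith [(dist_nonneg : (0:ℝ) ≤ dist (γ a) (γ t))]
    · have := hkey t b ht hmemb ht.2
      rw [hvb] at this
      linarith [(dist_nonneg : (0:ℝ) ≤ dist (γ t) (γ b))]
  -- continuity of v and surjectivity onto [0,2]
  have hvlip : LipschitzOnWith K v (Set.Icc a b) := by
    refine LipschitzOnWith.of_dist_le_mul fun s hs t ht => ?_
    rw [Real.dist_eq, ← hkey' s t hs ht]
    exact hγ.dist_le_mul s hs t ht
  have hsurj : ∀ u ∈ Set.Icc (0:ℝ) 2, ∃ t ∈ Set.Icc a b, v t = u := by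
    intro u hu
    have := intermediate_value_Icc hab hvlip.continuousOn
    rw [hva, hvb] at this
    obtain ⟨t, ht, hvt⟩ := this hu
    exact ⟨t, ht, hvt⟩
  refine ⟨hd2, hE2, ?_⟩
  -- construct the isometry
  have hT : ∀ p : ↥(γ '' Set.Icc a b), ∃ t, t ∈ Set.Icc a b ∧ γ t = p.1 := fun p => p.2
  choose T hT1 hT2 using hT
  have hS : ∀ u : ↥(Set.Icc (-1:ℝ) 1), ∃ t, t ∈ Set.Icc a b ∧ v t = u.1 + 1 := by
    intro u
    obtain ⟨t, ht, hvt⟩ := hsurj (u.1 + 1) ⟨by linarith [u.2.1], by linarith [u.2.2]⟩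
    exact ⟨t, ht, hvt⟩
  choose S hS1 hS2 using hS
  -- v is constant on fibers of γ
  have hfiber : ∀ s t : ℝ, s ∈ Set.Icc a b → t ∈ Set.Icc a b → γ s = γ t → v s = v t := by
    intro s t hs ht h
    have := hkey' s t hs ht
    rw [h, dist_self] at this
    have := abs_eq_zero.mp this.symm
    linarith
  have hmem : ∀ p : ↥(γ '' Set.Icc a b), v (T p) - 1 ∈ Set.Icc (-1:ℝ) 1 := fun p =>
    ⟨by linarith [(hvmono (T p) (hT1 p)).1], by linarith [(hvmono (T p) (hT1 p)).2]⟩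
  refine ⟨⟨⟨fun p => ⟨v (T p) - 1, hmem p⟩,
      fun u => ⟨γ (S u), Set.mem_image_of_mem γ (hS1 u)⟩, ?_, ?_⟩, ?_⟩⟩
  · -- left inverse
    intro p
    apply Subtype.ext
    show γ (S ⟨v (T p) - 1, hmem p⟩) = p.1
    rw [← hT2 p]
    refine eq_of_dist_eq_zero ?_
    rw [hkey' _ _ (hS1 ⟨v (T p) - 1, hmem p⟩) (hT1 p), hS2 ⟨v (T p) - 1, hmem p⟩]
    show |(v (T p) - 1 + 1) - v (T p)| = 0
    simp
  · -- right inverse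
    intro u
    apply Subtype.ext
    show v (T ⟨γ (S u), _⟩) - 1 = u.1
    have h := hfiber _ _ (hT1 ⟨γ (S u), Set.mem_image_of_mem γ (hS1 u)⟩) (hS1 u)
      (hT2 ⟨γ (S u), Set.mem_image_of_mem γ (hS1 u)⟩)
    rw [h, hS2 u]
    ring
  · -- isometry
    refine Isometry.of_dist_eq fun p q => ?_
    show dist (⟨v (T p) - 1, hmem p⟩ : ↥(Set.Icc (-1:ℝ) 1)) ⟨v (T q) - 1, hmem q⟩ = dist p q
    rw [Subtype.dist_eq, Subtype.dist_eq, Real.dist_eq]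
    rw [show (p : X) = γ (T p) from (hT2 p).symm, show (q : X) = γ (T q) from (hT2 q).symm,
      hkey' _ _ (hT1 p) (hT1 q)]
    congr 1
    ring
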